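/- Let s ∈ ℝ and η > 0, and let w : ℝ → [0,∞) be a measurable function such that w(ξ) ≥ η^{2^n} · f_n(T_*) · g_n(ξ) for every n ∈ ℕ and every ξ ∈ ℝ. Then, with C = min(1, 2^{2s}) > 0, one has the inequality (in [0,∞]): ∫_ℝ |ξ|^{2s} w(ξ)² dξ ≥ C · Σ_{n=1}^∞ 2^{n(2s−1)} · ( η² · e^{−(3/2)T_*·2^5} · 2^{−10} )^{2^n}, where e^{−(3/2)T_*·2^5} · 2^{−10} = 2^{−42}. -/

import Mathlib

open MeasureTheory Real Set
open scoped ENNReal NNReal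

/-- The sequence of functions `g n`: `g 0` is the indicator of `(1,2)` and
`g (n+1) = g n * g n` (convolution). -/
noncomputable def g : ℕ → ℝ → ℝ
  | 0 => Set.indicator (Set.Ioo (1:ℝ) 2) 1
  | n + 1 => fun ξ => ∫ ρ : ℝ, g n ρ * g n (ξ - ρ)

/-- `f n t = exp(-(3/2) t 2^(n+4)) 2^(-5(2^n-1)) 2^(5n)`. -/
noncomputable def f (n : ℕ) (t : ℝ) : ℝ :=
  Real.exp (-(3/2) * t * 2 ^ (n + 4)) * (2:ℝ) ^ (-(5:ℝ) * ((2:ℝ) ^ n - 1)) * 2 ^ (5 * n)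

/-- The blow-up time `T_* = (2 ln 2)/3`. -/
noncomputable def Tstar : ℝ := 2 * Real.log 2 / 3

/-- The (Fourier side) nonlinear term
`γ₁ (|·|v * |·|v)(ξ) - γ₂ (v * (·)² v)(ξ)`, as a well-defined element of `[0,∞]`
(recall `γ₂ ≤ 0 ≤ γ₁`). -/
noncomputable def nlTerm (γ₁ γ₂ : ℝ) (vτ : ℝ → ℝ) (ξ : ℝ) : ENNReal :=
  ENNReal.ofReal γ₁ * ∫⁻ ρ : ℝ, ENNReal.ofReal (|ρ| * vτ ρ * (|ξ - ρ| * vτ (ξ - ρ)))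
  + ENNReal.ofReal (-γ₂) * ∫⁻ ρ : ℝ, ENNReal.ofReal (vτ ρ * ((ξ - ρ)^2 * vτ (ξ - ρ)))

/-- A nonnegative measurable `v` on `[0,T] × ℝ` satisfies the Duhamel–Fourier
inequality if for all `t ∈ [0,T]` and `ξ ∈ ℝ`,
`v(t,ξ) ≥ η e^{-(3/2)tξ⁴} 𝟙_{(1,2)}(ξ) + ∫₀ᵗ e^{-(3/2)(t-τ)ξ⁴} (γ₁ (|·|v*|·|v) - γ₂ (v*(·)²v))(τ,ξ) dτ`,
the right-hand side being well defined in `[0,∞]`. -/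
def DuhamelIneq (γ₁ γ₂ η T : ℝ) (v : ℝ → ℝ → ℝ) : Prop :=
  ∀ t ∈ Set.Icc (0:ℝ) T, ∀ ξ : ℝ,
    ENNReal.ofReal (v t ξ) ≥
      ENNReal.ofReal (η * Real.exp (-(3/2) * t * ξ^4) * Set.indicator (Set.Ioo (1:ℝ) 2) 1 ξ)
      + ∫⁻ τ in Set.Ioc (0:ℝ) t,
          ENNReal.ofReal (Real.exp (-(3/2) * (t - τ) * ξ^4)) * nlTerm γ₁ γ₂ (v τ) ξ

/-- Lower bound for the (squared) `Ḣˢ` norm: if the nonnegative measurable `w`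
satisfies `w(ξ) ≥ η^(2^n) f_n(T_*) g_n(ξ)` for all `n` and `ξ`, then with
`C = min(1, 2^(2s)) > 0` one has (in `[0,∞]`)
`∫ |ξ|^(2s) w(ξ)² dξ ≥ C ∑_{n≥1} 2^(n(2s-1)) (η² e^{-(3/2)T_* 2^5} 2^(-10))^(2^n)`,
where moreover `e^{-(3/2)T_* 2^5} · 2^(-10) = 2^(-42)`. -/
lemma g_conv (n : ℕ) :
    g (n+1) = MeasureTheory.convolution (g n) (g n) (ContinuousLinearMap.mul ℝ ℝ) volume := by
  funext x
  simp [g, MeasureTheory.convolution]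

lemma g_prop : ∀ n : ℕ, Measurable (g n) ∧ (∀ ξ, 0 ≤ g n ξ) ∧ (∀ ξ, g n ξ ≤ 1) ∧
    (Function.support (g n) ⊆ Set.Ioo ((2:ℝ)^n) ((2:ℝ)^(n+1))) ∧ Integrable (g n) ∧
    (∫ ξ, g n ξ) = 1 := by
  intro n
  induction n with
  | zero =>
    have hsupp : Function.support (g 0) ⊆ Set.Ioo ((2:ℝ)^0) ((2:ℝ)^1) := by
      unfold g
      simp only [pow_zero, pow_one]
      exact Set.support_indicator_subset
    refine ⟨(measurable_const (a := (1:ℝ))).indicator measurableSet_Ioo, ?_, ?_, hsupp, ?_, ?_⟩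
    · intro ξ; exact Set.indicator_nonneg (fun _ _ => zero_le_one) ξ
    · intro ξ
      show Set.indicator (Set.Ioo (1:ℝ) 2) 1 ξ ≤ 1
      by_cases h : ξ ∈ Set.Ioo (1:ℝ) 2
      · rw [Set.indicator_of_mem h]; exact le_refl _
      · rw [Set.indicator_of_notMem h]; exact zero_le_one
    · exact (integrableOn_const measure_Ioo_lt_top.ne).integrable_indicator
        measurableSet_Ioo
    · show (∫ ξ, Set.indicator (Set.Ioo (1:ℝ) 2) (fun _ => (1:ℝ)) ξ) = 1
      rw [integral_indicator_const (1:ℝ) measurableSet_Ioo]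
      simp [Real.volume_Ioo]
      norm_num
  | succ n ih =>
    obtain ⟨hmeas, hnn, hle1, hsupp, hint, hint1⟩ := ih
    -- measurability
    have hmeas2 : Measurable fun p : ℝ × ℝ => g n p.2 * g n (p.1 - p.2) :=
      (hmeas.comp measurable_snd).mul (hmeas.comp (measurable_fst.sub measurable_snd))
    have hmeas' : Measurable (g (n+1)) := by
      show Measurable fun ξ => ∫ ρ, g n ρ * g n (ξ - ρ)
      exact (hmeas2.stronglyMeasurable.integral_prod_right').measurable
    -- integrability of the integrand at each point
    have hintg : ∀ ξ : ℝ, Integrable fun ρ => g n ρ * g n (ξ - ρ) := by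
      intro ξ
      refine hint.mono ?_ ?_
      · exact ((hmeas.mul (hmeas.comp (measurable_const.sub measurable_id)))).aestronglyMeasurable
      · filter_upwards with ρ
        rw [Real.norm_eq_abs, Real.norm_eq_abs, abs_of_nonneg (hnn ρ),
          abs_of_nonneg (mul_nonneg (hnn ρ) (hnn _))]
        exact mul_le_of_le_one_right (hnn ρ) (hle1 _)
    have hval : ∀ ξ, g (n+1) ξ = ∫ ρ, g n ρ * g n (ξ - ρ) := fun _ => rfl
    have hnn' : ∀ ξ, 0 ≤ g (n+1) ξ := by
      intro ξ; rw [hval]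
      exact integral_nonneg fun ρ => mul_nonneg (hnn ρ) (hnn _)
    have hle1' : ∀ ξ, g (n+1) ξ ≤ 1 := by
      intro ξ; rw [hval]
      calc (∫ ρ, g n ρ * g n (ξ - ρ)) ≤ ∫ ρ, g n ρ :=
            integral_mono (hintg ξ) hint fun ρ => mul_le_of_le_one_right (hnn ρ) (hle1 _)
        _ = 1 := hint1
    have hsupp' : Function.support (g (n+1)) ⊆ Set.Ioo ((2:ℝ)^(n+1)) ((2:ℝ)^(n+2)) := by
      intro ξ hξ
      by_contra hmem
      apply hξ
      rw [hval]
      have : ∀ ρ : ℝ, g n ρ * g n (ξ - ρ) = 0 := by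
        intro ρ
        by_cases h1 : g n ρ = 0
        · rw [h1, zero_mul]
        by_cases h2 : g n (ξ - ρ) = 0
        · rw [h2, mul_zero]
        exfalso
        have m1 := hsupp h1
        have m2 := hsupp h2
        apply hmem
        constructor
        · have : (2:ℝ)^(n+1) = 2^n + 2^n := by ring
          rw [this]
          calc (2:ℝ)^n + 2^n < ρ + (ξ - ρ) := add_lt_add m1.1 m2.1
            _ = ξ := by ring
        · have : (2:ℝ)^(n+2) = 2^(n+1) + 2^(n+1) := by ring
          rw [this]
          calc ξ = ρ + (ξ - ρ) := by ring
            _ < 2^(n+1) + 2^(n+1) := add_lt_add m1.2 m2.2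
      simp only [this, integral_zero]
    have hint' : Integrable (g (n+1)) := by
      rw [g_conv]
      exact Integrable.integrable_convolution (L := ContinuousLinearMap.mul ℝ ℝ) hint hint
    have hint1' : (∫ ξ, g (n+1) ξ) = 1 := by
      rw [g_conv]
      rw [integral_convolution (L := ContinuousLinearMap.mul ℝ ℝ) hint hint]
      simp [hint1]
    exact ⟨hmeas', hnn', hle1', hsupp', hint', hint1'⟩

lemma g_sq_lintegral (n : ℕ) :
    ((2:ℝ≥0∞)^n)⁻¹ ≤ ∫⁻ ξ, ENNReal.ofReal (g n ξ ^ 2) := by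
  obtain ⟨hmeas, hnn, hle1, hsupp, hint, hint1⟩ := g_prop n
  set F : ℝ → ℝ≥0∞ := fun ξ => ENNReal.ofReal (g n ξ) with hF
  set I : ℝ → ℝ≥0∞ := (Set.Ioo ((2:ℝ)^n) ((2:ℝ)^(n+1))).indicator (fun _ => 1) with hI
  have hFmeas : AEMeasurable F volume := (ENNReal.measurable_ofReal.comp hmeas).aemeasurable
  have hImeas : AEMeasurable I volume :=
    (measurable_const.indicator measurableSet_Ioo).aemeasurable
  have hone : (1:ℝ≥0∞) = ∫⁻ ξ, F ξ := by
    rw [hF]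
    rw [← ofReal_integral_eq_lintegral_ofReal hint (Filter.Eventually.of_forall hnn), hint1]
    simp
  have hFI : ∀ ξ, F ξ = (F * I) ξ := by
    intro ξ
    by_cases h : ξ ∈ Set.Ioo ((2:ℝ)^n) ((2:ℝ)^(n+1))
    · simp [hI, Set.indicator_of_mem h]
    · have : g n ξ = 0 := by
        by_contra hne
        exact h (hsupp hne)
      simp [hF, hI, this, Set.indicator_of_notMem h]
  have hconj : (2:ℝ).HolderConjugate 2 := Real.holderConjugate_iff.mpr ⟨one_lt_two, by norm_num⟩
  have holder := ENNReal.lintegral_mul_le_Lp_mul_Lq volume hconj hFmeas hImeas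
  -- compute ∫⁻ I ^ 2
  have hI2 : (∫⁻ ξ, I ξ ^ (2:ℝ)) = (2:ℝ≥0∞)^n := by
    have : ∀ ξ, I ξ ^ (2:ℝ) = I ξ := by
      intro ξ
      by_cases h : ξ ∈ Set.Ioo ((2:ℝ)^n) ((2:ℝ)^(n+1)) <;>
        simp [hI, Set.indicator_of_mem, Set.indicator_of_notMem, h, ENNReal.rpow_natCast]
    rw [lintegral_congr this, hI, lintegral_indicator measurableSet_Ioo]
    simp [Real.volume_Ioo]
    have h2 : (2:ℝ)^(n+1) - 2^n = 2^n := by ring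
    rw [h2, ENNReal.ofReal_pow (by norm_num)]
    norm_num
  have hF2 : (∫⁻ ξ, F ξ ^ (2:ℝ)) = ∫⁻ ξ, ENNReal.ofReal (g n ξ ^ 2) := by
    apply lintegral_congr
    intro ξ
    show ENNReal.ofReal (g n ξ) ^ (2:ℝ) = ENNReal.ofReal (g n ξ ^ 2)
    rw [ENNReal.ofReal_pow (hnn ξ), ← ENNReal.rpow_natCast (ENNReal.ofReal (g n ξ)) 2]
    norm_num
  set A := ∫⁻ ξ, ENNReal.ofReal (g n ξ ^ 2) with hA
  have h1 : (1:ℝ≥0∞) ≤ A ^ (1/2:ℝ) * ((2:ℝ≥0∞)^n) ^ (1/2:ℝ) := by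
    calc (1:ℝ≥0∞) = ∫⁻ ξ, F ξ := hone
      _ = ∫⁻ ξ, (F * I) ξ := lintegral_congr hFI
      _ ≤ (∫⁻ ξ, F ξ ^ (2:ℝ)) ^ (1/2:ℝ) * (∫⁻ ξ, I ξ ^ (2:ℝ)) ^ (1/2:ℝ) := holder
      _ = A ^ (1/2:ℝ) * ((2:ℝ≥0∞)^n) ^ (1/2:ℝ) := by rw [hF2, hI2]
  have h2 : (1:ℝ≥0∞) ≤ A * (2:ℝ≥0∞)^n := by
    have := ENNReal.rpow_le_rpow h1 (by norm_num : (0:ℝ) ≤ 2)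
    rw [ENNReal.one_rpow, ← ENNReal.mul_rpow_of_nonneg _ _ (by norm_num : (0:ℝ) ≤ 1/2),
      ← ENNReal.rpow_mul] at this
    norm_num at this
    exact this
  have hne : ((2:ℝ≥0∞)^n) ≠ 0 := by positivity
  have hnetop : ((2:ℝ≥0∞)^n) ≠ ⊤ := by
    exact ENNReal.pow_ne_top (by norm_num)
  calc ((2:ℝ≥0∞)^n)⁻¹ = 1 * ((2:ℝ≥0∞)^n)⁻¹ := (one_mul _).symm
    _ ≤ (A * (2:ℝ≥0∞)^n) * ((2:ℝ≥0∞)^n)⁻¹ := by gcongr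
    _ = A * ((2:ℝ≥0∞)^n * ((2:ℝ≥0∞)^n)⁻¹) := by rw [mul_assoc]
    _ = A := by rw [ENNReal.mul_inv_cancel hne hnetop, mul_one]

lemma two_rpow_def (c : ℝ) : (2:ℝ) ^ c = Real.exp (Real.log 2 * c) :=
  Real.rpow_def_of_pos two_pos c

lemma exp_eq (m : ℕ) :
    Real.exp (-(3/2) * Tstar * 2^(m+4)) = (2:ℝ) ^ (-((2:ℝ)^(m+4))) := by
  rw [two_rpow_def]
  congr 1
  unfold Tstar
  ring

lemma f_eq (m : ℕ) :
    f m Tstar = (2:ℝ) ^ (-((2:ℝ)^(m+4)) + (-(5:ℝ) * ((2:ℝ)^m - 1)) + 5*(m:ℝ)) := by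
  rw [Real.rpow_add two_pos, Real.rpow_add two_pos]
  unfold f
  rw [exp_eq]
  congr 1
  rw [← Real.rpow_natCast 2 (5*m)]
  congr 1
  push_cast
  ring

lemma f_pos (m : ℕ) : 0 < f m Tstar := by
  rw [f_eq]; positivity

lemma const_eq :
    Real.exp (-(3/2) * Tstar * 2^5) * (2:ℝ)^(-(10:ℤ)) = (2:ℝ)^(-(42:ℤ)) := by
  have h1 : Real.exp (-(3/2) * Tstar * 2^5) = (2:ℝ) ^ (-(32:ℝ)) := by
    rw [two_rpow_def]
    congr 1
    unfold Tstar
    ring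
  have h2 : ((2:ℝ)^(-(10:ℤ))) = (2:ℝ)^(-(10:ℝ)) := by
    rw [← Real.rpow_intCast]; norm_num
  have h3 : ((2:ℝ)^(-(42:ℤ))) = (2:ℝ)^(-(42:ℝ)) := by
    rw [← Real.rpow_intCast]; norm_num
  rw [h1, h2, h3, ← Real.rpow_add two_pos]
  norm_num

lemma key_real (s : ℝ) (n : ℕ) :
    (2:ℝ) ^ (((n:ℝ)+1)*(2*s-1)) * ((2:ℝ)^(-(42:ℤ))) ^ (2^(n+1))
      ≤ ((2:ℝ)^(n+1)) ^ (2*s) * (f (n+1) Tstar)^2 * ((2:ℝ)^(n+1))⁻¹ := by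
  have h2 : (0:ℝ) < 2 := two_pos
  have hz : ((2:ℝ)^(-(42:ℤ))) = (2:ℝ)^(-(42:ℝ)) := by
    rw [← Real.rpow_intCast]; norm_num
  have hL : ((2:ℝ)^(-(42:ℤ))) ^ (2^(n+1)) = (2:ℝ) ^ ((-(42:ℝ)) * (2:ℝ)^(n+1)) := by
    rw [hz, ← Real.rpow_natCast ((2:ℝ)^(-(42:ℝ))) (2^(n+1)), ← Real.rpow_mul h2.le]
    congr 1
    push_cast
    ring
  have hbase : ((2:ℝ)^(n+1)) ^ (2*s) = (2:ℝ) ^ (((n:ℝ)+1) * (2*s)) := by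
    rw [← Real.rpow_natCast 2 (n+1), ← Real.rpow_mul h2.le]
    congr 1
    push_cast
    ring
  have hf2 : (f (n+1) Tstar)^2 =
      (2:ℝ) ^ ((-((2:ℝ)^(n+1+4)) + (-(5:ℝ) * ((2:ℝ)^(n+1) - 1)) + 5*(((n:ℕ)+1:ℕ):ℝ)) * 2) := by
    rw [f_eq, ← Real.rpow_natCast ((2:ℝ)^_) 2, ← Real.rpow_mul h2.le]
    norm_num
  have hinv : ((2:ℝ)^(n+1))⁻¹ = (2:ℝ) ^ (-((n:ℝ)+1)) := by
    rw [Real.rpow_neg h2.le, ← Real.rpow_natCast 2 (n+1)]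
    congr 2
    push_cast
    ring
  rw [hL, hbase, hf2, hinv, ← Real.rpow_add h2, ← Real.rpow_add h2, ← Real.rpow_add h2]
  apply Real.rpow_le_rpow_of_exponent_le one_le_two
  have h16 : (2:ℝ)^(n+1+4) = (2:ℝ)^(n+1) * 16 := by rw [pow_add]; norm_num
  push_cast
  nlinarith [h16, Nat.cast_nonneg (α := ℝ) n]

lemma key (s η : ℝ) (hη : 0 < η) (n : ℕ) :
    min 1 ((2:ℝ)^(2*s)) * ((2:ℝ) ^ (((n:ℝ)+1)*(2*s-1)) *
      (η^2 * Real.exp (-(3/2)*Tstar*2^5) * (2:ℝ)^(-(10:ℤ)))^(2^(n+1)))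
    ≤ min 1 ((2:ℝ)^(2*s)) *
      (((2:ℝ)^(n+1)) ^ (2*s) * (η^(2^(n+1)) * f (n+1) Tstar)^2 * ((2:ℝ)^(n+1))⁻¹) := by
  apply mul_le_mul_of_nonneg_left _ (le_min zero_le_one (Real.rpow_nonneg two_pos.le _))
  have hc : (0:ℝ) ≤ (η^2)^(2^(n+1)) := pow_nonneg (sq_nonneg η) _
  have hr := key_real s n
  calc (2:ℝ) ^ (((n:ℝ)+1)*(2*s-1)) *
        (η^2 * Real.exp (-(3/2)*Tstar*2^5) * (2:ℝ)^(-(10:ℤ)))^(2^(n+1))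
      = (η^2)^(2^(n+1)) *
        ((2:ℝ) ^ (((n:ℝ)+1)*(2*s-1)) * ((2:ℝ)^(-(42:ℤ))) ^ (2^(n+1))) := by
        rw [mul_assoc (η^2), const_eq, mul_pow]
        ring
    _ ≤ (η^2)^(2^(n+1)) *
        (((2:ℝ)^(n+1)) ^ (2*s) * (f (n+1) Tstar)^2 * ((2:ℝ)^(n+1))⁻¹) :=
        mul_le_mul_of_nonneg_left hr hc
    _ = ((2:ℝ)^(n+1)) ^ (2*s) * (η^(2^(n+1)) * f (n+1) Tstar)^2 * ((2:ℝ)^(n+1))⁻¹ := by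
        rw [mul_pow, pow_right_comm]
        ring

lemma piece (s η : ℝ) (hη : 0 < η) (w : ℝ → ℝ) (hwpos : ∀ ξ, 0 ≤ w ξ)
    (hlow : ∀ n : ℕ, ∀ ξ : ℝ, η ^ (2 ^ n) * f n Tstar * g n ξ ≤ w ξ) (n : ℕ) :
    ENNReal.ofReal (min 1 ((2:ℝ)^(2*s))) *
      ENNReal.ofReal ((2:ℝ) ^ (((n:ℝ)+1)*(2*s-1)) *
        (η^2 * Real.exp (-(3/2)*Tstar*2^5) * (2:ℝ)^(-(10:ℤ)))^(2^(n+1)))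
    ≤ ∫⁻ ξ in Set.Ioo ((2:ℝ)^(n+1)) ((2:ℝ)^(n+1+1)),
        ENNReal.ofReal (|ξ|^(2*s) * (w ξ)^2) := by
  set C := min 1 ((2:ℝ)^(2*s)) with hCdef
  have hC : 0 ≤ C := le_min zero_le_one (Real.rpow_nonneg two_pos.le _)
  set K := η^(2^(n+1)) * f (n+1) Tstar with hKdef
  have hK : 0 ≤ K := mul_nonneg (pow_nonneg hη.le _) (f_pos (n+1)).le
  set c := C * ((2:ℝ)^(n+1)) ^ (2*s) * K^2 with hcdef
  have hc : 0 ≤ c :=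
    mul_nonneg (mul_nonneg hC (Real.rpow_nonneg (by positivity) _)) (sq_nonneg _)
  obtain ⟨hmeas, hnn, hle1, hsupp, hint, hint1⟩ := g_prop (n+1)
  -- pointwise inequality
  have hptw : ∀ ξ : ℝ, c * g (n+1) ξ ^ 2 ≤ |ξ|^(2*s) * (w ξ)^2 := by
    intro ξ
    by_cases hmem : ξ ∈ Set.Ioo ((2:ℝ)^(n+1)) ((2:ℝ)^(n+1+1))
    · have hξpos : (0:ℝ) < ξ := lt_trans (by positivity) hmem.1
      have habs : |ξ| = ξ := abs_of_pos hξpos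
      have h1 : C * ((2:ℝ)^(n+1)) ^ (2*s) ≤ |ξ| ^ (2*s) := by
        rw [habs]
        rcases le_or_gt 0 (2*s) with hs | hs
        · calc C * ((2:ℝ)^(n+1)) ^ (2*s) ≤ 1 * ((2:ℝ)^(n+1)) ^ (2*s) :=
              mul_le_mul_of_nonneg_right (min_le_left _ _)
                (Real.rpow_nonneg (by positivity) _)
            _ = ((2:ℝ)^(n+1)) ^ (2*s) := one_mul _
            _ ≤ ξ ^ (2*s) := Real.rpow_le_rpow (by positivity) hmem.1.le hs
        · calc C * ((2:ℝ)^(n+1)) ^ (2*s) ≤ (2:ℝ)^(2*s) * ((2:ℝ)^(n+1)) ^ (2*s) :=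
              mul_le_mul_of_nonneg_right (min_le_right _ _)
                (Real.rpow_nonneg (by positivity) _)
            _ = ((2:ℝ)^(n+1+1)) ^ (2*s) := by
                rw [← Real.mul_rpow two_pos.le (by positivity)]
                congr 1
                ring
            _ ≤ ξ ^ (2*s) := Real.rpow_le_rpow_of_nonpos hξpos hmem.2.le hs.le
      have h2 : (K * g (n+1) ξ)^2 ≤ (w ξ)^2 :=
        pow_le_pow_left₀ (mul_nonneg hK (hnn ξ)) (hlow (n+1) ξ) 2
      calc c * g (n+1) ξ ^ 2 = (C * ((2:ℝ)^(n+1)) ^ (2*s)) * (K * g (n+1) ξ)^2 := by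
            rw [hcdef]; ring
        _ ≤ |ξ|^(2*s) * (w ξ)^2 :=
            mul_le_mul h1 h2 (sq_nonneg _)
              (Real.rpow_nonneg (abs_nonneg ξ) _)
    · have hg0 : g (n+1) ξ = 0 := by
        by_contra h
        exact hmem (hsupp h)
      rw [hg0]
      simpa using mul_nonneg (Real.rpow_nonneg (abs_nonneg ξ) _) (sq_nonneg (w ξ))
  -- the chain
  have hIooMeas : MeasurableSet (Set.Ioo ((2:ℝ)^(n+1)) ((2:ℝ)^(n+1+1))) := measurableSet_Ioo
  have hstep1 : ∫⁻ ξ in Set.Ioo ((2:ℝ)^(n+1)) ((2:ℝ)^(n+1+1)),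
        ENNReal.ofReal (c * g (n+1) ξ ^ 2)
      ≤ ∫⁻ ξ in Set.Ioo ((2:ℝ)^(n+1)) ((2:ℝ)^(n+1+1)),
        ENNReal.ofReal (|ξ|^(2*s) * (w ξ)^2) :=
    lintegral_mono fun ξ => ENNReal.ofReal_le_ofReal (hptw ξ)
  have hstep2 : ∫⁻ ξ in Set.Ioo ((2:ℝ)^(n+1)) ((2:ℝ)^(n+1+1)),
        ENNReal.ofReal (c * g (n+1) ξ ^ 2)
      = ENNReal.ofReal c *
        ∫⁻ ξ in Set.Ioo ((2:ℝ)^(n+1)) ((2:ℝ)^(n+1+1)), ENNReal.ofReal (g (n+1) ξ ^ 2) := by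
    simp_rw [ENNReal.ofReal_mul hc]
    exact lintegral_const_mul' _ _ ENNReal.ofReal_ne_top
  have hstep3 : ∫⁻ ξ in Set.Ioo ((2:ℝ)^(n+1)) ((2:ℝ)^(n+1+1)), ENNReal.ofReal (g (n+1) ξ ^ 2)
      = ∫⁻ ξ, ENNReal.ofReal (g (n+1) ξ ^ 2) := by
    rw [← lintegral_indicator hIooMeas]
    apply lintegral_congr
    intro ξ
    by_cases h : ξ ∈ Set.Ioo ((2:ℝ)^(n+1)) ((2:ℝ)^(n+1+1))
    · rw [Set.indicator_of_mem h]
    · rw [Set.indicator_of_notMem h]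
      have hg0 : g (n+1) ξ = 0 := by
        by_contra hne
        exact h (hsupp hne)
      simp [hg0]
  have hinv : ENNReal.ofReal (((2:ℝ)^(n+1))⁻¹) = ((2:ℝ≥0∞)^(n+1))⁻¹ := by
    rw [ENNReal.ofReal_inv_of_pos (by positivity)]
    congr 1
    rw [ENNReal.ofReal_pow (by norm_num)]
    norm_num
  calc ENNReal.ofReal C *
        ENNReal.ofReal ((2:ℝ) ^ (((n:ℝ)+1)*(2*s-1)) *
          (η^2 * Real.exp (-(3/2)*Tstar*2^5) * (2:ℝ)^(-(10:ℤ)))^(2^(n+1)))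
      = ENNReal.ofReal (C * ((2:ℝ) ^ (((n:ℝ)+1)*(2*s-1)) *
          (η^2 * Real.exp (-(3/2)*Tstar*2^5) * (2:ℝ)^(-(10:ℤ)))^(2^(n+1)))) :=
        (ENNReal.ofReal_mul hC).symm
    _ ≤ ENNReal.ofReal (c * ((2:ℝ)^(n+1))⁻¹) := by
        apply ENNReal.ofReal_le_ofReal
        calc C * ((2:ℝ) ^ (((n:ℝ)+1)*(2*s-1)) *
              (η^2 * Real.exp (-(3/2)*Tstar*2^5) * (2:ℝ)^(-(10:ℤ)))^(2^(n+1)))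
            ≤ C * (((2:ℝ)^(n+1)) ^ (2*s) * (η^(2^(n+1)) * f (n+1) Tstar)^2 *
              ((2:ℝ)^(n+1))⁻¹) := key s η hη n
          _ = c * ((2:ℝ)^(n+1))⁻¹ := by rw [hcdef, hKdef]; ring
    _ = ENNReal.ofReal c * ((2:ℝ≥0∞)^(n+1))⁻¹ := by
        rw [ENNReal.ofReal_mul hc, hinv]
    _ ≤ ENNReal.ofReal c * ∫⁻ ξ, ENNReal.ofReal (g (n+1) ξ ^ 2) :=
        by gcongr; exact g_sq_lintegral (n+1)
    _ = ∫⁻ ξ in Set.Ioo ((2:ℝ)^(n+1)) ((2:ℝ)^(n+1+1)),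
          ENNReal.ofReal (c * g (n+1) ξ ^ 2) := by rw [hstep2, hstep3]
    _ ≤ _ := hstep1

theorem hs_norm_lower_bound (s η : ℝ) (hη : 0 < η)
    (w : ℝ → ℝ) (hwmeas : Measurable w) (hwpos : ∀ ξ, 0 ≤ w ξ)
    (hlow : ∀ n : ℕ, ∀ ξ : ℝ, η ^ (2 ^ n) * f n Tstar * g n ξ ≤ w ξ) :
    (0 : ℝ) < min 1 ((2:ℝ) ^ (2*s)) ∧
    Real.exp (-(3/2) * Tstar * 2 ^ 5) * (2:ℝ) ^ (-(10:ℤ)) = (2:ℝ) ^ (-(42:ℤ)) ∧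
    ENNReal.ofReal (min 1 ((2:ℝ) ^ (2*s))) *
        ∑' n : ℕ, ENNReal.ofReal ((2:ℝ) ^ (((n:ℝ) + 1) * (2*s - 1)) *
          (η ^ 2 * Real.exp (-(3/2) * Tstar * 2 ^ 5) * (2:ℝ) ^ (-(10:ℤ))) ^ (2 ^ (n + 1)))
      ≤ ∫⁻ ξ : ℝ, ENNReal.ofReal (|ξ| ^ (2*s) * (w ξ) ^ 2) := by
  refine ⟨lt_min one_pos (Real.rpow_pos_of_pos two_pos _), const_eq, ?_⟩
  set I : ℕ → Set ℝ := fun n => Set.Ioo ((2:ℝ)^(n+1)) ((2:ℝ)^(n+1+1)) with hIdef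
  have hImeas : ∀ n, MeasurableSet (I n) := fun n => measurableSet_Ioo
  have hdisj' : ∀ i j : ℕ, i < j → Disjoint (I i) (I j) := by
    intro i j hij
    apply Set.disjoint_left.mpr
    intro x hxi hxj
    have h1 : x < (2:ℝ)^(i+1+1) := hxi.2
    have h2 : (2:ℝ)^(j+1) < x := hxj.1
    have h3 : (2:ℝ)^(i+1+1) ≤ (2:ℝ)^(j+1) :=
      pow_le_pow_right₀ one_le_two (by omega)
    linarith
  have hdisj : Pairwise (Function.onFun Disjoint I) := by
    intro i j hij
    rcases hij.lt_or_gt with h | h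
    · exact hdisj' i j h
    · exact (hdisj' j i h).symm
  calc ENNReal.ofReal (min 1 ((2:ℝ) ^ (2*s))) *
        ∑' n : ℕ, ENNReal.ofReal ((2:ℝ) ^ (((n:ℝ) + 1) * (2*s - 1)) *
          (η ^ 2 * Real.exp (-(3/2) * Tstar * 2 ^ 5) * (2:ℝ) ^ (-(10:ℤ))) ^ (2 ^ (n + 1)))
      = ∑' n : ℕ, ENNReal.ofReal (min 1 ((2:ℝ) ^ (2*s))) *
          ENNReal.ofReal ((2:ℝ) ^ (((n:ℝ) + 1) * (2*s - 1)) *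
          (η ^ 2 * Real.exp (-(3/2) * Tstar * 2 ^ 5) * (2:ℝ) ^ (-(10:ℤ))) ^ (2 ^ (n + 1))) :=
        ENNReal.tsum_mul_left.symm
    _ ≤ ∑' n : ℕ, ∫⁻ ξ in I n, ENNReal.ofReal (|ξ| ^ (2*s) * (w ξ) ^ 2) :=
        ENNReal.tsum_le_tsum fun n => piece s η hη w hwpos hlow n
    _ = ∫⁻ ξ in ⋃ n, I n, ENNReal.ofReal (|ξ| ^ (2*s) * (w ξ) ^ 2) :=
        (lintegral_iUnion hImeas hdisj _).symm
    _ ≤ ∫⁻ ξ : ℝ, ENNReal.ofReal (|ξ| ^ (2*s) * (w ξ) ^ 2) :=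
        setLIntegral_le_lintegral _ _
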